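/- Let A be an m×n real matrix. There is no x ∈ ℝ^n with Ax ≤ 0, x ≥ 0, and x ≠ 0 if and only if there exists y ∈ ℝ^m with y ≥ 0 and yᵀA > 0ᵀ (every component strictly positive). -/

import Mathlib

open Matrix in

theorem ville (m n : ℕ) (A : Matrix (Fin m) (Fin n) ℝ) :
    (¬ ∃ x : Fin n → ℝ, A.mulVec x ≤ 0 ∧ 0 ≤ x ∧ x ≠ 0) ↔
    (∃ y : Fin m → ℝ, 0 ≤ y ∧ ∀ j, 0 < A.vecMul y j) := by
  constructor
  · intro h
    set s : Set (Fin m → ℝ) := Set.Iic 0 with hs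
    set t : Set (Fin m → ℝ) := A.mulVec '' stdSimplex ℝ (Fin n) with ht
    have hdisj : Disjoint s t := by
      rw [Set.disjoint_left]
      rintro z hz ⟨x, hx, rfl⟩
      exact h ⟨x, hz, hx.1, fun hx0 => by
        have := hx.2; rw [hx0] at this; simp at this⟩
    have hcont : Continuous (A.mulVec) :=
      (A.mulVecLin).continuous_of_finiteDimensional
    obtain ⟨f, u, v, hfs, huv, hft⟩ :=
      geometric_hahn_banach_closed_compact (convex_Iic (0 : Fin m → ℝ)) isClosed_Iic
        ((convex_stdSimplex ℝ (Fin n)).linear_image A.mulVecLin)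
        ((isCompact_stdSimplex ℝ (Fin n)).image hcont) hdisj
    have hf : ∀ z : Fin m → ℝ, f z = ∑ i, z i * f (Pi.single i 1) := by
      intro z
      have hz : z = ∑ i, z i • (Pi.single i 1 : Fin m → ℝ) := by
        funext j
        simp [Finset.sum_apply, Pi.single_apply, Finset.sum_ite_eq']
      conv_lhs => rw [hz]
      rw [map_sum]
      simp [smul_eq_mul]
    have hu0 : 0 < u := by
      have := hfs 0 (by simp [hs])
      simpa using this
    have hyi : ∀ i, 0 ≤ f (Pi.single i 1) := by
      intro i
      by_contra hneg
      push_neg at hneg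
      set c : ℝ := (u + 1) / (-(f (Pi.single i 1))) with hc
      have hcpos : 0 < c := div_pos (by linarith) (by linarith)
      have hmem : (-c) • (Pi.single i 1 : Fin m → ℝ) ∈ s := by
        intro j
        simp only [Pi.smul_apply, smul_eq_mul, Pi.zero_apply]
        rcases eq_or_ne j i with rfl | hne
        · simp; linarith
        · simp [Pi.single_eq_of_ne hne]
      have hlt := hfs _ hmem
      rw [_root_.map_smul, smul_eq_mul] at hlt
      have hne : f (Pi.single i 1) ≠ 0 := ne_of_lt hneg
      have heq : -c * f (Pi.single i 1) = u + 1 := by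
        rw [hc, div_neg, neg_neg, div_mul_cancel₀ _ hne]
      linarith
    refine ⟨fun i => f (Pi.single i 1), hyi, fun j => ?_⟩
    have hmem : Pi.single j (1 : ℝ) ∈ stdSimplex ℝ (Fin n) := single_mem_stdSimplex ℝ j
    have hlt := hft (A.mulVec (Pi.single j 1)) ⟨_, hmem, rfl⟩
    rw [hf] at hlt
    have heq : ∑ i, A.mulVec (Pi.single j 1) i * f (Pi.single i 1)
        = A.vecMul (fun i => f (Pi.single i 1)) j := by
      simp [Matrix.mulVec_single, Matrix.vecMul, dotProduct, mul_comm]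
    rw [heq] at hlt
    linarith
  · intro hyp hex
    obtain ⟨y, hy, hpos⟩ := hyp
    obtain ⟨x, hAx, hx, hx0⟩ := hex
    have h1 : y ⬝ᵥ A.mulVec x ≤ 0 := by
      apply Finset.sum_nonpos
      intro i _
      exact mul_nonpos_of_nonneg_of_nonpos (hy i) (hAx i)
    rw [Matrix.dotProduct_mulVec] at h1
    have h2 : 0 < A.vecMul y ⬝ᵥ x := by
      obtain ⟨j, hj⟩ : ∃ j, 0 < x j := by
        by_contra hc
        push_neg at hc
        exact hx0 (funext fun j => le_antisymm (hc j) (hx j))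
      apply Finset.sum_pos'
      · exact fun i _ => mul_nonneg (hpos i).le (hx i)
      · exact ⟨j, Finset.mem_univ j, mul_pos (hpos j) hj⟩
    linarith
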